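/- Let H be a real Hilbert space, let ω > 0, and let A : H → H be ω-strongly monotone, i.e. ⟨A x − A y, x − y⟩ ≥ ω ‖x − y‖² for all x, y ∈ H. Let g₁, g₂ : [0, ∞) → H be continuous and let u₁, u₂ : [0, ∞) → H be differentiable with u_i'(t) + A(u_i(t)) = g_i(t) for all t ≥ 0 (i = 1, 2). Then for all 0 ≤ s ≤ t, e^{ω t} ‖u₁(t) − u₂(t)‖² ≤ e^{ω s} ‖u₁(s) − u₂(s)‖² + ω^{−1} ∫_s^t e^{ω τ} ‖g₁(τ) − g₂(τ)‖² dτ. -/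

import Mathlib

open MeasureTheory Metric Set Real

/-- **Weighted Gronwall estimate for strongly monotone evolution equations:** if `A` is
`ω`-strongly monotone and `u₁, u₂` solve `uᵢ' + A uᵢ = gᵢ` on `[0,∞)`, then for
`0 ≤ s ≤ t`,
`e^{ωt}‖u₁(t)-u₂(t)‖² ≤ e^{ωs}‖u₁(s)-u₂(s)‖² + ω⁻¹ ∫_s^t e^{ωτ}‖g₁(τ)-g₂(τ)‖² dτ`. -/
theorem gronwall_strongly_monotone
    {H : Type*} [NormedAddCommGroup H] [InnerProductSpace ℝ H] [CompleteSpace H]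
    (ω : ℝ) (hω : 0 < ω) (A : H → H)
    (hA : ∀ x y : H, ω * ‖x - y‖ ^ 2 ≤ @inner ℝ _ _ (A x - A y) (x - y))
    (g₁ g₂ : ℝ → H) (hg₁ : ContinuousOn g₁ (Ici 0)) (hg₂ : ContinuousOn g₂ (Ici 0))
    (u₁ u₂ u₁' u₂' : ℝ → H)
    (hu₁ : ∀ t : ℝ, 0 ≤ t → HasDerivAt u₁ (u₁' t) t ∧ u₁' t + A (u₁ t) = g₁ t)
    (hu₂ : ∀ t : ℝ, 0 ≤ t → HasDerivAt u₂ (u₂' t) t ∧ u₂' t + A (u₂ t) = g₂ t) :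
    ∀ s t : ℝ, 0 ≤ s → s ≤ t →
      Real.exp (ω * t) * ‖u₁ t - u₂ t‖ ^ 2 ≤
        Real.exp (ω * s) * ‖u₁ s - u₂ s‖ ^ 2 +
          ω⁻¹ * ∫ τ in s..t, Real.exp (ω * τ) * ‖g₁ τ - g₂ τ‖ ^ 2 := by
  intro s t hs hst
  rcases eq_or_lt_of_le hst with rfl | hlt
  · simp
  set h : ℝ → ℝ := fun τ => Real.exp (ω * τ) * ‖g₁ τ - g₂ τ‖ ^ 2 with hh
  have hhcont : ContinuousOn h (Ici 0) := by
    exact ((Real.continuous_exp.comp (continuous_const.mul continuous_id)).continuousOn).mul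
      ((hg₁.sub hg₂).norm.pow 2)
  have hsub : Icc s t ⊆ Ici (0:ℝ) := fun x hx => le_trans hs hx.1
  have hint : ∀ τ, τ ∈ Icc s t → IntervalIntegrable h volume s τ := by
    intro τ hτ
    apply (hhcont.mono ?_).intervalIntegrable
    rw [uIcc_of_le hτ.1]
    exact fun x hx => le_trans hs hx.1
  set F : ℝ → ℝ := fun τ =>
    ω⁻¹ * (∫ x in s..τ, h x) - Real.exp (ω * τ) * ‖u₁ τ - u₂ τ‖ ^ 2 with hF
  have hFcont : ContinuousOn F (Icc s t) := by
    apply ContinuousOn.sub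
    · apply ContinuousOn.mul continuousOn_const
      have := intervalIntegral.continuousOn_primitive_interval
        (f := h) (μ := volume) (a := s) (b := t)
        (((hhcont.mono ?_)).integrableOn_compact isCompact_uIcc)
      · rwa [uIcc_of_le hst] at this
      · rw [uIcc_of_le hst]; exact hsub
    · have c1 : ContinuousOn u₁ (Ici 0) := fun x hx =>
        ((hu₁ x hx).1.continuousAt).continuousWithinAt
      have c2 : ContinuousOn u₂ (Ici 0) := fun x hx =>
        ((hu₂ x hx).1.continuousAt).continuousWithinAt
      exact (((Real.continuous_exp.comp (continuous_const.mul continuous_id)).continuousOn).mul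
        (((c1.sub c2).norm.pow 2))).mono hsub
  have key : ∀ τ ∈ Ioo s t, HasDerivAt F
      (ω⁻¹ * h τ - (ω * (Real.exp (ω * τ) * ‖u₁ τ - u₂ τ‖ ^ 2) +
        Real.exp (ω * τ) * ((inner ℝ (u₁ τ - u₂ τ) (u₁' τ - u₂' τ) : ℝ) +
          inner ℝ (u₁' τ - u₂' τ) (u₁ τ - u₂ τ)))) τ := by
    intro τ hτ
    have hτ0 : 0 < τ := lt_of_le_of_lt hs hτ.1
    have h1 : HasDerivAt (fun x => ω⁻¹ * (∫ y in s..x, h y)) (ω⁻¹ * h τ) τ := by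
      refine HasDerivAt.const_mul _ ?_
      refine intervalIntegral.integral_hasDerivAt_right (hint τ ⟨hτ.1.le, hτ.2.le⟩) ?_ ?_
      · exact ⟨Ioi 0, Ioi_mem_nhds hτ0,
          (hhcont.mono Ioi_subset_Ici_self).aestronglyMeasurable measurableSet_Ioi⟩
      · exact hhcont.continuousAt
          (Filter.mem_of_superset (Ioi_mem_nhds hτ0) Ioi_subset_Ici_self)
    have hw : HasDerivAt (fun x => u₁ x - u₂ x) (u₁' τ - u₂' τ) τ :=
      ((hu₁ τ hτ0.le).1).sub ((hu₂ τ hτ0.le).1)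
    have hn : HasDerivAt (fun x => ‖u₁ x - u₂ x‖ ^ 2)
        ((inner ℝ (u₁ τ - u₂ τ) (u₁' τ - u₂' τ) : ℝ) +
          inner ℝ (u₁' τ - u₂' τ) (u₁ τ - u₂ τ)) τ := by
      have := (HasDerivAt.inner ℝ hw hw :
        HasDerivAt (fun x => (inner ℝ (u₁ x - u₂ x) (u₁ x - u₂ x) : ℝ)) _ τ)
      simpa only [real_inner_self_eq_norm_sq] using this
    have he : HasDerivAt (fun x => Real.exp (ω * x)) (ω * Real.exp (ω * τ)) τ := by
      exact ((hasDerivAt_id τ).const_mul ω).exp.congr_deriv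
        (by show Real.exp (ω * τ) * (ω * 1) = _; ring)
    have := h1.sub (he.mul hn)
    exact this.congr_deriv (by ring)
  have hderiv_nonneg : ∀ τ ∈ Ioo s t, 0 ≤ deriv F τ := by
    intro τ hτ
    rw [(key τ hτ).deriv]
    have hτ0 : 0 ≤ τ := hs.trans hτ.1.le
    have hw' : u₁' τ - u₂' τ = (g₁ τ - g₂ τ) - (A (u₁ τ) - A (u₂ τ)) := by
      have e1 := (hu₁ τ hτ0).2
      have e2 := (hu₂ τ hτ0).2
      have : u₁' τ = g₁ τ - A (u₁ τ) := by rw [← e1]; abel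
      have : u₂' τ = g₂ τ - A (u₂ τ) := by rw [← e2]; abel
      rw [show u₁' τ = g₁ τ - A (u₁ τ) by rw [← e1]; abel, this]; abel
    set w := u₁ τ - u₂ τ
    set G := g₁ τ - g₂ τ
    have hsym : (inner ℝ w (u₁' τ - u₂' τ) : ℝ) = inner ℝ (u₁' τ - u₂' τ) w :=
      real_inner_comm _ _
    rw [hsym, hw']
    have hinner : (inner ℝ ((G - (A (u₁ τ) - A (u₂ τ)))) w : ℝ) ≤
        ‖G‖ * ‖w‖ - ω * ‖w‖ ^ 2 := by
      rw [inner_sub_left]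
      have h1 : (inner ℝ G w : ℝ) ≤ ‖G‖ * ‖w‖ := real_inner_le_norm _ _
      have h2 : ω * ‖w‖ ^ 2 ≤ inner ℝ (A (u₁ τ) - A (u₂ τ)) w := hA _ _
      linarith
    have hE : 0 < Real.exp (ω * τ) := Real.exp_pos _
    have hiv : ω * ω⁻¹ = 1 := mul_inv_cancel₀ hω.ne'
    have hnn : 0 ≤ ‖w‖ := norm_nonneg _
    have hGn : 0 ≤ ‖G‖ := norm_nonneg _
    have hquad : 2 * (‖G‖ * ‖w‖) ≤ ω * ‖w‖ ^ 2 + ω⁻¹ * ‖G‖ ^ 2 := by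
      nlinarith [sq_nonneg (ω * ‖w‖ - ‖G‖), mul_pos hω hω, sq_nonneg ‖w‖, sq_nonneg ‖G‖]
    have hmain : ω * (Real.exp (ω * τ) * ‖w‖ ^ 2) +
        Real.exp (ω * τ) * ((inner ℝ (G - (A (u₁ τ) - A (u₂ τ))) w : ℝ) +
          inner ℝ (G - (A (u₁ τ) - A (u₂ τ))) w) ≤ ω⁻¹ * h τ := by
      have : (inner ℝ (G - (A (u₁ τ) - A (u₂ τ))) w : ℝ) +
          inner ℝ (G - (A (u₁ τ) - A (u₂ τ))) w ≤
          2 * (‖G‖ * ‖w‖) - 2 * (ω * ‖w‖ ^ 2) := by linarith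
      have hb : ω * ‖w‖ ^ 2 + ((inner ℝ (G - (A (u₁ τ) - A (u₂ τ))) w : ℝ) +
          inner ℝ (G - (A (u₁ τ) - A (u₂ τ))) w) ≤ ω⁻¹ * ‖G‖ ^ 2 := by linarith
      have := mul_le_mul_of_nonneg_left hb hE.le
      calc ω * (Real.exp (ω * τ) * ‖w‖ ^ 2) +
            Real.exp (ω * τ) * ((inner ℝ (G - (A (u₁ τ) - A (u₂ τ))) w : ℝ) +
              inner ℝ (G - (A (u₁ τ) - A (u₂ τ))) w)
          = Real.exp (ω * τ) * (ω * ‖w‖ ^ 2 +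
              ((inner ℝ (G - (A (u₁ τ) - A (u₂ τ))) w : ℝ) +
                inner ℝ (G - (A (u₁ τ) - A (u₂ τ))) w)) := by ring
        _ ≤ Real.exp (ω * τ) * (ω⁻¹ * ‖G‖ ^ 2) := this
        _ = ω⁻¹ * h τ := by rw [hh]; ring
    linarith
  have hFdiff : DifferentiableOn ℝ F (interior (Icc s t)) := by
    rw [interior_Icc]
    exact fun τ hτ => (key τ hτ).differentiableAt.differentiableWithinAt
  have hmono : MonotoneOn F (Icc s t) := by
    apply monotoneOn_of_deriv_nonneg (convex_Icc s t) hFcont hFdiff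
    rw [interior_Icc]; exact hderiv_nonneg
  have := hmono (left_mem_Icc.2 hst) (right_mem_Icc.2 hst) hst
  simp only [hF, intervalIntegral.integral_same, mul_zero, zero_sub, neg_le_sub_iff_le_add,
    mul_zero] at this
  linarith [this]
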